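/- Let k be a field, let R and A be commutative k-algebras, let J ⊆ R and n ⊆ A be ideals, and let q, h ≥ 0 be integers with J^{q+1} = 0, J^q ≠ 0, n^{h+1} = 0 and n^h ≠ 0. In B := R ⊗_k A, let I be the ideal generated by the images of J and of n under the canonical k-algebra maps R → B (r ↦ r ⊗ 1) and A → B (a ↦ 1 ⊗ a). Then I^{q+h+1} = 0 and I^{q+h} ≠ 0. Moreover, if instead of the nilpotency of J one only assumes ⋂_{N ≥ 1} J^N = 0, and A is finite-dimensional as a k-vector space with n nilpotent, then ⋂_{N ≥ 1} I^N = 0. -/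

import Mathlib

open TensorProduct


section aux
variable {k : Type*} [Field k] {R A : Type*}
    [CommRing R] [CommRing A] [Algebra k R] [Algebra k A]

/-- Contraction of the right tensor factor along a linear functional. -/
noncomputable def ctr (l : A →ₗ[k] k) : (R ⊗[k] A) →ₗ[k] R :=
  (TensorProduct.rid k R).toLinearMap ∘ₗ LinearMap.lTensor R l

@[simp] lemma ctr_tmul (l : A →ₗ[k] k) (r : R) (a : A) :
    ctr l (r ⊗ₜ[k] a) = l a • r := by
  simp [ctr]

lemma sharp_sup_pow (P Q : Ideal (R ⊗[k] A)) (a b : ℕ) :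
    (P ⊔ Q) ^ (a + b + 1) ≤ P ^ (a + 1) ⊔ Q ^ (b + 1) := by
  rw [← Ideal.add_eq_sup, ← Ideal.add_eq_sup, add_pow, Ideal.sum_eq_sup]
  apply Finset.sup_le
  intro i hi
  by_cases hn : a + 1 ≤ i
  · exact Ideal.mul_le_left.trans (Ideal.mul_le_left.trans
      ((Ideal.pow_le_pow_right hn).trans le_sup_left))
  · refine Ideal.mul_le_left.trans (Ideal.mul_le_right.trans
      ((Ideal.pow_le_pow_right ?_).trans le_sup_right))
    simp only [Finset.mem_range] at hi
    omega

lemma ctr_mem (K : Ideal R) (l : A →ₗ[k] k) {z : R ⊗[k] A}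
    (hz : z ∈ Ideal.map (Algebra.TensorProduct.includeLeftRingHom : R →+* R ⊗[k] A) K) :
    ctr l z ∈ K := by
  set π := Ideal.Quotient.mkₐ k K
  set F := Algebra.TensorProduct.map π (AlgHom.id k A)
  have hFz : F z = 0 := by
    have hker : Ideal.map (Algebra.TensorProduct.includeLeftRingHom : R →+* R ⊗[k] A) K ≤
        RingHom.ker F.toRingHom := by
      rw [Ideal.map_le_iff_le_comap]
      intro x hx
      simp only [Ideal.mem_comap, RingHom.mem_ker, AlgHom.toRingHom_eq_coe, RingHom.coe_coe,
        Algebra.TensorProduct.includeLeftRingHom_apply]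
      have : π x = 0 := by
        simpa [π, Ideal.Quotient.eq_zero_iff_mem] using hx
      simp [F, this]
    exact hker hz
  have hcomm : π.toLinearMap ∘ₗ (ctr l : R ⊗[k] A →ₗ[k] R)
      = (ctr l : (R ⧸ K) ⊗[k] A →ₗ[k] R ⧸ K) ∘ₗ F.toLinearMap := by
    apply TensorProduct.ext'
    intro r a
    simp [F, π]
    exact map_smul (Ideal.Quotient.mkₐ k K) (l a) r
  have : π (ctr l z) = 0 := by
    have := LinearMap.congr_fun hcomm z
    simpa [hFz] using this
  simpa [π, Ideal.Quotient.eq_zero_iff_mem] using this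

end aux

section aux2
variable {k : Type*} [Field k] {R A : Type*}
    [CommRing R] [CommRing A] [Algebra k R] [Algebra k A]

lemma tensor_expansion [FiniteDimensional k A] (z : R ⊗[k] A) :
    z = ∑ i, (ctr ((Module.finBasis k A).coord i) z) ⊗ₜ[k] (Module.finBasis k A i) := by
  set b := Module.finBasis k A
  set S : R ⊗[k] A →ₗ[k] R ⊗[k] A :=
    ∑ i, ((TensorProduct.mk k R A).flip (b i)) ∘ₗ (ctr (b.coord i))
  have hS : S = LinearMap.id := by
    apply TensorProduct.ext'
    intro r a
    simp only [S, LinearMap.sum_apply, LinearMap.comp_apply, ctr_tmul,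
      TensorProduct.mk_apply, LinearMap.flip_apply, LinearMap.id_apply]
    calc (∑ i, (b.coord i a • r) ⊗ₜ[k] b i)
        = ∑ i, r ⊗ₜ[k] (b.coord i a • b i) := by
          refine Finset.sum_congr rfl fun i _ => ?_
          rw [TensorProduct.smul_tmul]
      _ = r ⊗ₜ[k] (∑ i, b.coord i a • b i) := by rw [TensorProduct.tmul_sum]
      _ = r ⊗ₜ[k] a := by simp only [Module.Basis.coord_apply]; rw [b.sum_repr a]
  have := LinearMap.congr_fun hS z
  simp only [LinearMap.id_apply] at this
  conv_lhs => rw [← this]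
  simp only [S, LinearMap.sum_apply, LinearMap.comp_apply, TensorProduct.mk_apply,
    LinearMap.flip_apply]
end aux2

/-- Girth of Weil thickenings, algebraic form. Let `J ⊆ R`, `n ⊆ A` be ideals of
commutative `k`-algebras and let `I` be the ideal of `R ⊗[k] A` generated by the images of
`J` and `n`. If `J` has exact nilpotency order `q` and `n` has exact nilpotency order `h`,
then `I` has exact nilpotency order `q + h`. Moreover, if instead `⋂_{N≥1} J^N = 0`, `A` is
finite-dimensional over `k` and `n` is nilpotent, then `⋂_{N≥1} I^N = 0`. -/
theorem tensor_ideal_girth {k : Type*} [Field k] {R A : Type*}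
    [CommRing R] [CommRing A] [Algebra k R] [Algebra k A]
    (J : Ideal R) (n : Ideal A) (q h : ℕ)
    (I : Ideal (R ⊗[k] A))
    (hI : I = Ideal.map (Algebra.TensorProduct.includeLeftRingHom : R →+* R ⊗[k] A) J ⊔
        Ideal.map (Algebra.TensorProduct.includeRight : A →ₐ[k] R ⊗[k] A).toRingHom n) :
    ((J ^ (q + 1) = ⊥ ∧ J ^ q ≠ ⊥ ∧ n ^ (h + 1) = ⊥ ∧ n ^ h ≠ ⊥) →
      I ^ (q + h + 1) = ⊥ ∧ I ^ (q + h) ≠ ⊥) ∧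
    (((⨅ N : ℕ, J ^ (N + 1)) = ⊥ ∧ FiniteDimensional k A ∧ (∃ m : ℕ, n ^ m = ⊥)) →
      (⨅ N : ℕ, I ^ (N + 1)) = ⊥) := by
  set f := (Algebra.TensorProduct.includeLeftRingHom : R →+* R ⊗[k] A) with hf
  set g := (Algebra.TensorProduct.includeRight : A →ₐ[k] R ⊗[k] A).toRingHom with hg
  set P := Ideal.map f J with hP
  set Q := Ideal.map g n with hQ
  constructor
  · rintro ⟨hJ1, hJq, hn1, hnh⟩
    constructor
    · rw [hI, eq_bot_iff]
      refine le_trans (sharp_sup_pow P Q q h) ?_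
      have h1 : P ^ (q + 1) = ⊥ := by
        rw [hP, ← Ideal.map_pow, hJ1, Ideal.map_bot]
      have h2 : Q ^ (h + 1) = ⊥ := by
        rw [hQ, ← Ideal.map_pow, hn1, Ideal.map_bot]
      rw [h1, h2, sup_idem]
    · obtain ⟨x, hx, hx0⟩ := Submodule.exists_mem_ne_zero_of_ne_bot hJq
      obtain ⟨y, hy, hy0⟩ := Submodule.exists_mem_ne_zero_of_ne_bot hnh
      intro hbot
      have h1 : (x ⊗ₜ[k] (1 : A)) ∈ P ^ q := by
        rw [hP, ← Ideal.map_pow]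
        exact Ideal.mem_map_of_mem f hx
      have h2 : ((1 : R) ⊗ₜ[k] y) ∈ Q ^ h := by
        rw [hQ, ← Ideal.map_pow]
        exact Ideal.mem_map_of_mem g hy
      have hmul := Ideal.mul_mem_mul h1 h2
      rw [Algebra.TensorProduct.tmul_mul_tmul, mul_one, one_mul] at hmul
      have hPI : P ≤ I := by rw [hI]; exact le_sup_left
      have hQI : Q ≤ I := by rw [hI]; exact le_sup_right
      have hle : P ^ q * Q ^ h ≤ I ^ (q + h) := by
        rw [pow_add]
        exact Ideal.mul_mono (Ideal.pow_right_mono hPI q) (Ideal.pow_right_mono hQI h)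
      have hmem : (x ⊗ₜ[k] y) ∈ I ^ (q + h) := hle hmul
      rw [hbot, Submodule.mem_bot] at hmem
      have hally : ∀ l : Module.Dual k A, l y = 0 := by
        intro l
        have hc := congrArg (ctr l) hmem
        rw [ctr_tmul, map_zero] at hc
        rcases smul_eq_zero.mp hc with h' | h'
        · exact h'
        · exact absurd h' hx0
      exact hy0 ((Module.forall_dual_apply_eq_zero_iff k y).mp hally)
  · rintro ⟨hJ, hfin, m, hm⟩
    haveI := hfin
    rw [eq_bot_iff]
    intro z hz
    rw [Submodule.mem_bot]
    have hmain : ∀ l : A →ₗ[k] k, ctr l z = 0 := by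
      intro l
      have hzmem : ∀ N : ℕ, ctr l z ∈ J ^ (N + 1) := by
        intro N
        have h1 : z ∈ I ^ (N + m + 1) := by
          have := (Submodule.mem_iInf _).mp hz (N + m)
          exact this
        have h2 : I ^ (N + m + 1) ≤ P ^ (N + 1) := by
          rw [hI]
          refine le_trans (sharp_sup_pow P Q N m) ?_
          have hQm : Q ^ (m + 1) = ⊥ := by
            have hqm : Q ^ m = ⊥ := by rw [hQ, ← Ideal.map_pow, hm, Ideal.map_bot]
            rw [pow_succ, hqm, Ideal.bot_mul]
          rw [hQm, sup_bot_eq]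
        have h3 : z ∈ Ideal.map f (J ^ (N + 1)) := by
          rw [Ideal.map_pow]
          exact h2 h1
        exact ctr_mem _ l h3
      have : ctr l z ∈ ⨅ N : ℕ, J ^ (N + 1) := (Submodule.mem_iInf _).mpr hzmem
      rw [hJ, Submodule.mem_bot] at this
      exact this
    rw [tensor_expansion (k := k) z]
    simp [hmain]
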